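/- Let f : ℕ → [0,∞) be a decreasing function with ∑_{n≥1} f(n) = ∞. Then there exists a strictly increasing function a : ℕ → ℕ with lim_{n→∞} (a(n) − a(n−1)) = ∞ such that ∑_{n≥1} f(a(n)) = ∞. -/

import Mathlib

open Filter

/-- Auxiliary recursion: `(aux f n).1` is the point `a n`, `(aux f n).2` is the
partial sum `∑_{i ≤ n} f (a i)`. -/
noncomputable def stmt3aux (f : ℕ → ℝ) : ℕ → ℕ × ℝ
  | 0 => (0, f 0)
  | n + 1 =>
      let q := stmt3aux f n
      let a1 := q.1 + (⌊q.2⌋₊ + 1)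
      (a1, q.2 + f a1)

/-- If `f : ℕ → [0,∞)` is decreasing with divergent sum, then there exists a strictly
increasing `a : ℕ → ℕ` whose increments tend to infinity such that `∑ f(a(n)) = ∞`. -/
theorem stmt3 (f : ℕ → ℝ) (hf0 : ∀ n, 0 ≤ f n) (hfanti : Antitone f)
    (hfdiv : ¬ Summable f) :
    ∃ a : ℕ → ℕ, StrictMono a ∧
      Tendsto (fun n => a (n + 1) - a n) atTop atTop ∧
      ¬ Summable (fun n => f (a n)) := by
  set a : ℕ → ℕ := fun n => (stmt3aux f n).1 with ha
  set g : ℕ → ℕ := fun n => ⌊(stmt3aux f n).2⌋₊ + 1 with hg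
  have ha0 : a 0 = 0 := rfl
  have hstep : ∀ n, a (n + 1) = a n + g n := fun n => rfl
  have hmono : StrictMono a := by
    apply strictMono_nat_of_lt_succ
    intro n
    rw [hstep n]
    exact Nat.lt_add_of_pos_right (Nat.succ_pos _)
  -- partial sums description
  have hT : ∀ n, (stmt3aux f n).2 = ∑ i ∈ Finset.range (n + 1), f (a i) := by
    intro n
    induction n with
    | zero => simp [stmt3aux, ha0]
    | succ n ih =>
        rw [Finset.sum_range_succ, ← ih]
        rfl
  -- key block inequality
  have hblock : ∀ n, (∑ m ∈ Finset.Ico (a n) (a (n + 1)), f m) ≤ (g n : ℝ) * f (a n) := by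
    intro n
    have hcard : (Finset.Ico (a n) (a (n + 1))).card = g n := by
      rw [hstep n, Nat.card_Ico, Nat.add_sub_cancel_left]
    calc (∑ m ∈ Finset.Ico (a n) (a (n + 1)), f m)
        ≤ ∑ m ∈ Finset.Ico (a n) (a (n + 1)), f (a n) := by
          apply Finset.sum_le_sum
          intro m hm
          exact hfanti (Finset.mem_Ico.mp hm).1
      _ = (g n : ℝ) * f (a n) := by
          rw [Finset.sum_const, hcard, nsmul_eq_mul]
  -- telescoping bound
  have htel : ∀ N, (∑ m ∈ Finset.range (a N), f m) ≤ ∑ n ∈ Finset.range N, (g n : ℝ) * f (a n) := by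
    intro N
    induction N with
    | zero => simp [ha0]
    | succ N ih =>
        rw [Finset.sum_range_succ]
        have hsplit : (∑ m ∈ Finset.range (a (N + 1)), f m)
            = (∑ m ∈ Finset.range (a N), f m) + ∑ m ∈ Finset.Ico (a N) (a (N + 1)), f m := by
          simp only [Finset.range_eq_Ico]
          exact (Finset.sum_Ico_consecutive _ (Nat.zero_le _)
            (le_of_lt (hmono (Nat.lt_succ_self N)))).symm
        rw [hsplit]
        exact add_le_add ih (hblock N)
  have haN : ∀ N, N ≤ a N := by
    intro N
    induction N with
    | zero => simp
    | succ N ih =>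
        have h1 : 1 ≤ g N := Nat.succ_le_succ (Nat.zero_le _)
        rw [hstep N]
        omega
  -- divergence of ∑ f (a n)
  have hdiv : ¬ Summable (fun n => f (a n)) := by
    intro hs
    set L := ∑' n, f (a n) with hL
    have hpart : ∀ n, (∑ i ∈ Finset.range n, f (a i)) ≤ L := fun n =>
      Summable.sum_le_tsum _ (fun i _ => hf0 _) hs
    have hgle : ∀ n, (g n : ℝ) ≤ (⌊L⌋₊ : ℝ) + 1 := by
      intro n
      have : (stmt3aux f n).2 ≤ L := by rw [hT n]; exact hpart (n + 1)
      have := Nat.floor_mono this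
      push_cast [hg]
      exact_mod_cast add_le_add_left (Nat.cast_le.mpr this : ((⌊(stmt3aux f n).2⌋₊ : ℝ)) ≤ (⌊L⌋₊ : ℝ)) 1
    have hbound : ∀ N, (∑ m ∈ Finset.range N, f m) ≤ ((⌊L⌋₊ : ℝ) + 1) * L := by
      intro N
      calc (∑ m ∈ Finset.range N, f m)
          ≤ ∑ m ∈ Finset.range (a N), f m := by
            apply Finset.sum_le_sum_of_subset_of_nonneg
            · exact Finset.range_subset_range.mpr (haN N)
            · intro m _ _; exact hf0 m
        _ ≤ ∑ n ∈ Finset.range N, (g n : ℝ) * f (a n) := htel N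
        _ ≤ ∑ n ∈ Finset.range N, ((⌊L⌋₊ : ℝ) + 1) * f (a n) := by
            apply Finset.sum_le_sum
            intro n _
            exact mul_le_mul_of_nonneg_right (hgle n) (hf0 _)
        _ = ((⌊L⌋₊ : ℝ) + 1) * ∑ n ∈ Finset.range N, f (a n) := by
            rw [Finset.mul_sum]
        _ ≤ ((⌊L⌋₊ : ℝ) + 1) * L := by
            apply mul_le_mul_of_nonneg_left (hpart N)
            positivity
    have htend := (not_summable_iff_tendsto_nat_atTop_of_nonneg hf0).mp hfdiv
    obtain ⟨N, hN⟩ := (htend.eventually_gt_atTop (((⌊L⌋₊ : ℝ) + 1) * L)).exists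
    exact absurd (hbound N) (not_le.mpr hN)
  refine ⟨a, hmono, ?_, hdiv⟩
  -- increments tend to infinity
  have hTtend : Tendsto (fun n => (stmt3aux f n).2) atTop atTop := by
    have h1 := (not_summable_iff_tendsto_nat_atTop_of_nonneg (fun n => hf0 (a n))).mp hdiv
    have h2 : Tendsto (fun n : ℕ => n + 1) atTop atTop := tendsto_add_atTop_nat 1
    exact Tendsto.congr (fun n => (hT n).symm) (h1.comp h2)
  have hgtend : Tendsto g atTop atTop := by
    have hfl : Tendsto (fun n => ⌊(stmt3aux f n).2⌋₊) atTop atTop :=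
      (tendsto_nat_floor_atTop (α := ℝ)).comp hTtend
    exact tendsto_atTop_mono (fun n => Nat.le_succ _) hfl
  have : (fun n => a (n + 1) - a n) = g := by
    funext n
    rw [hstep n, Nat.add_sub_cancel_left]
  rw [this]
  exact hgtend
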